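/- arXiv:1706.08914 — 3 statements merged into one kernel-verified Lean document; each statement's English description precedes it below -/
import Mathlib

section
/- For all positive real numbers a, b, one has b/(a(a+b)) ≤ ψ_1(a) - ψ_1(a+b) ≤ (1 + 2/a)·b/(a(a+b)), where ψ_1 is the trigamma function. -/
open MeasureTheory

/-- The polygamma function of order `n`: the `(n+1)`-st derivative of `log ∘ Γ`. -/
noncomputable def polygamma (n : ℕ) (z : ℝ) : ℝ :=
  iteratedDeriv (n + 1) (fun x => Real.log (Real.Gamma x)) z

open Filter Topology Real Set Finset

section aux

lemma tuo_comp_seq {f : ℕ → ℝ → ℝ} {g : ℝ → ℝ} {s : Set ℝ}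
    (h : TendstoUniformlyOn f g atTop s) {r : ℕ → ℕ} (hr : Tendsto r atTop atTop) :
    TendstoUniformlyOn (fun n => f (r n)) g atTop s :=
  fun u hu => hr.eventually (h u hu)

lemma tuo_const {a : ℕ → ℝ} {L : ℝ} (h : Tendsto a atTop (𝓝 L)) (s : Set ℝ) :
    TendstoUniformlyOn (fun n (_ : ℝ) => a n) (fun _ => L) atTop s := by
  rw [Metric.tendstoUniformlyOn_iff]
  intro ε hε
  filter_upwards [Metric.tendsto_nhds.mp h ε hε] with n hn x _
  rwa [dist_comm]

lemma summable_inv_sq_shift : Summable (fun m : ℕ => (((m : ℝ) + 1) ^ 2)⁻¹) := by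
  have : Summable (fun m : ℕ => ((m : ℝ) ^ 2)⁻¹) := by
    simpa using Real.summable_one_div_nat_pow.mpr (by norm_num : 1 < 2)
  have := (summable_nat_add_iff 1).mpr this
  simpa [add_comm] using this

lemma aux_ge {c : ℝ} (hc : 0 < c) (hc1 : c ≤ 1) {x : ℝ} (hcx : c < x) (m : ℕ) :
    c * ((m : ℝ) + 1) ≤ x + m := by
  have h0 : (0 : ℝ) ≤ m := Nat.cast_nonneg m
  nlinarith

end aux

noncomputable def F1 (n : ℕ) (x : ℝ) : ℝ :=
  Real.log n - ∑ m ∈ Finset.range (n + 1), 1 / (x + m)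

noncomputable def F2 (n : ℕ) (x : ℝ) : ℝ :=
  ∑ m ∈ Finset.range (n + 1), 1 / (x + m) ^ 2

noncomputable def Dg (x : ℝ) : ℝ :=
  -Real.eulerMascheroniConstant + ∑' m : ℕ, (1 / ((m : ℝ) + 1) - 1 / (x + m))

noncomputable def Eg (x : ℝ) : ℝ := ∑' m : ℕ, 1 / (x + m) ^ 2

section unif

variable {c d : ℝ} (hc : 0 < c) (hc1 : c ≤ 1) (hcd : c < d)

include hc hc1 hcd in
lemma tuo_F2 : TendstoUniformlyOn F2 Eg atTop (Ioo c d) := by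
  have h := tendstoUniformlyOn_tsum_nat (f := fun (m : ℕ) (x : ℝ) => 1 / (x + m) ^ 2)
      (u := fun m => c⁻¹ ^ 2 * (((m : ℝ) + 1) ^ 2)⁻¹)
      (summable_inv_sq_shift.mul_left _) (s := Ioo c d) ?_
  · exact tuo_comp_seq h (tendsto_add_atTop_nat 1)
  · intro m x hx
    have h1 : c * ((m : ℝ) + 1) ≤ x + m := aux_ge hc hc1 hx.1 m
    have h2 : (0:ℝ) < c * ((m : ℝ) + 1) := by positivity
    have h3 : (0:ℝ) < x + m := h2.trans_le h1
    rw [Real.norm_eq_abs, abs_of_nonneg (by positivity)]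
    have hb : (1:ℝ)/(x+m)^2 ≤ 1/((c*((m:ℝ)+1))^2) :=
      one_div_le_one_div_of_le (by positivity) (pow_le_pow_left₀ h2.le h1 2)
    calc (1:ℝ)/(x+m)^2 ≤ 1/((c*((m:ℝ)+1))^2) := hb
      _ = c⁻¹ ^ 2 * (((m : ℝ) + 1) ^ 2)⁻¹ := by
          rw [mul_pow, one_div, mul_inv, inv_pow]

include hc hc1 hcd in
lemma tuo_F1 : TendstoUniformlyOn F1 Dg atTop (Ioo c d) := by
  -- the variable part
  have h := tendstoUniformlyOn_tsum_nat
      (f := fun (m : ℕ) (x : ℝ) => 1 / ((m : ℝ) + 1) - 1 / (x + m))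
      (u := fun m => ((d + 1) / c) * (((m : ℝ) + 1) ^ 2)⁻¹)
      (summable_inv_sq_shift.mul_left _) (s := Ioo c d) ?_
  swap
  · intro m x hx
    have h1 : c * ((m : ℝ) + 1) ≤ x + m := aux_ge hc hc1 hx.1 m
    have h2 : (0:ℝ) < c * ((m : ℝ) + 1) := by positivity
    have h3 : (0:ℝ) < x + m := h2.trans_le h1
    have hm1 : (0:ℝ) < (m:ℝ) + 1 := by positivity
    have heq : 1 / ((m : ℝ) + 1) - 1 / (x + m) = (x - 1) / (((m:ℝ)+1) * (x + m)) := by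
      field_simp
      ring
    show |1 / ((m : ℝ) + 1) - 1 / (x + (m:ℝ))| ≤ (d + 1) / c * (((m:ℝ) + 1) ^ 2)⁻¹
    rw [heq, abs_div, abs_of_nonneg (by positivity : (0:ℝ) ≤ ((m:ℝ)+1) * (x + m))]
    have hnum : |x - 1| ≤ d + 1 := by
      rw [abs_le]
      constructor <;> nlinarith [hx.1, hx.2]
    have hden : c * ((m:ℝ)+1)^2 ≤ ((m:ℝ)+1) * (x + m) := by
      calc c * ((m:ℝ)+1)^2 = ((m:ℝ)+1) * (c * ((m:ℝ)+1)) := by ring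
        _ ≤ ((m:ℝ)+1) * (x + m) := by
            exact mul_le_mul_of_nonneg_left h1 hm1.le
    calc |x - 1| / (((m:ℝ)+1) * (x + m)) ≤ (d + 1) / (c * ((m:ℝ)+1)^2) :=
          div_le_div₀ (by linarith [hc.trans hcd]) hnum (by positivity) hden
      _ = ((d + 1) / c) * (((m : ℝ) + 1) ^ 2)⁻¹ := by
          rw [← div_eq_mul_inv, div_div]
  -- the constant part
  have hharm : ∀ n : ℕ, ((harmonic (n+1) : ℚ) : ℝ) = ∑ m ∈ Finset.range (n + 1), 1 / ((m:ℝ) + 1) := by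
    intro n
    rw [harmonic]
    push_cast
    simp [one_div]
  have t0 : Tendsto (fun n : ℕ => Real.log n - ∑ m ∈ Finset.range (n + 1), 1 / ((m:ℝ) + 1))
      atTop (𝓝 (-Real.eulerMascheroniConstant)) := by
    have hA : Tendsto (fun n : ℕ => ((harmonic (n+1) : ℚ) : ℝ) - Real.log ((n:ℝ)+1)) atTop
        (𝓝 Real.eulerMascheroniConstant) := by
      have := Real.tendsto_harmonic_sub_log.comp (tendsto_add_atTop_nat 1)
      refine this.congr fun n => ?_
      simp [Function.comp]
    have hB := Real.tendsto_log_nat_add_one_sub_log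
    have := (hA.neg.sub hB)
    rw [show -Real.eulerMascheroniConstant - 0 = -Real.eulerMascheroniConstant by ring] at this
    refine this.congr fun n => ?_
    rw [hharm n]
    ring
  have hmain := (tuo_const t0 (Ioo c d)).add (tuo_comp_seq h (tendsto_add_atTop_nat 1))
  refine (hmain.congr ?_).congr_right ?_
  · filter_upwards with n x hx
    simp only [Pi.add_apply, F1, Finset.sum_sub_distrib]
    ring
  · intro x hx
    rfl

end unif

lemma hasDerivAt_logGammaSeq (n : ℕ) {x : ℝ} (hx : 0 < x) :
    HasDerivAt (fun y => Real.BohrMollerup.logGammaSeq y n) (F1 n x) x := by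
  have h1 : HasDerivAt (fun y : ℝ => y * Real.log n + Real.log (Nat.factorial n))
      (Real.log n) x := by
    simpa using ((hasDerivAt_id x).mul_const (Real.log n)).add_const (Real.log (Nat.factorial n))
  have h2 : HasDerivAt (fun y : ℝ => ∑ m ∈ Finset.range (n + 1), Real.log (y + m))
      (∑ m ∈ Finset.range (n + 1), 1 / (x + m)) x := by
    apply HasDerivAt.fun_sum
    intro m _
    have hxm : x + (m : ℝ) ≠ 0 := by positivity
    simpa using (((hasDerivAt_id x).add_const (m : ℝ)).log hxm)
  simpa [Real.BohrMollerup.logGammaSeq, F1] using h1.fun_sub h2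

lemma hasDerivAt_F1 (n : ℕ) {x : ℝ} (hx : 0 < x) :
    HasDerivAt (F1 n) (F2 n x) x := by
  have h2 : HasDerivAt (fun y : ℝ => ∑ m ∈ Finset.range (n + 1), 1 / (y + m))
      (∑ m ∈ Finset.range (n + 1), -(1 / (x + m) ^ 2)) x := by
    apply HasDerivAt.fun_sum
    intro m _
    have hxm : x + (m : ℝ) ≠ 0 := by positivity
    have := (((hasDerivAt_id x).add_const (m : ℝ)).fun_inv hxm)
    simpa [one_div, neg_div] using this
  have h3 := (hasDerivAt_const x (Real.log n)).fun_sub h2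
  unfold F1
  refine h3.congr_deriv ?_
  simp [F2, Finset.sum_neg_distrib]

section transfer

variable {c d : ℝ} (hc : 0 < c) (hc1 : c ≤ 1) (hcd : c < d)

include hc hc1 hcd in
lemma hasDerivAt_logGamma {x : ℝ} (hx : x ∈ Ioo c d) :
    HasDerivAt (fun y => Real.log (Real.Gamma y)) (Dg x) x := by
  refine hasDerivAt_of_tendstoUniformlyOn isOpen_Ioo (tuo_F1 hc hc1 hcd)
    (Eventually.of_forall fun n y hy => hasDerivAt_logGammaSeq n (hc.trans hy.1)) ?_ hx
  intro y hy
  exact Real.BohrMollerup.tendsto_log_gamma (hc.trans hy.1)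

include hc hc1 hcd in
lemma hasDerivAt_Dg {x : ℝ} (hx : x ∈ Ioo c d) : HasDerivAt Dg (Eg x) x := by
  refine hasDerivAt_of_tendstoUniformlyOn isOpen_Ioo (tuo_F2 hc hc1 hcd)
    (Eventually.of_forall fun n y hy => hasDerivAt_F1 n (hc.trans hy.1)) ?_ hx
  intro y hy
  exact (tuo_F1 hc hc1 hcd).tendsto_at hy

end transfer

lemma polygamma_one_eq {x : ℝ} (hx : 0 < x) : polygamma 1 x = Eg x := by
  set c : ℝ := min x 1 / 2 with hcdef
  have hc : 0 < c := by positivity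
  have hc1 : c ≤ 1 := by
    have := min_le_right x 1
    rw [hcdef]; linarith
  have hcx : c < x := by
    have h1 := min_le_left x 1
    rw [hcdef]; linarith
  have hmem : x ∈ Ioo c (x + 1) := ⟨hcx, by linarith⟩
  have hcd : c < x + 1 := by linarith
  have hD := fun y (hy : y ∈ Ioo c (x+1)) => hasDerivAt_logGamma hc hc1 hcd hy
  have hE := fun y (hy : y ∈ Ioo c (x+1)) => hasDerivAt_Dg hc hc1 hcd hy
  have heq : deriv (fun t => Real.log (Real.Gamma t)) =ᶠ[𝓝 x] Dg := by
    filter_upwards [isOpen_Ioo.mem_nhds hmem] with y hy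
    exact (hD y hy).deriv
  have h2 : polygamma 1 x = deriv (deriv (fun t => Real.log (Real.Gamma t))) x := by
    simp [polygamma, iteratedDeriv_succ, iteratedDeriv_one]
  rw [h2, heq.deriv_eq]
  exact (hE x hmem).deriv

lemma summable_inv_sq_add {x : ℝ} (hx : 0 < x) : Summable (fun m : ℕ => 1 / (x + m) ^ 2) := by
  set c : ℝ := min x 1 with hcdef
  have hc : 0 < c := by positivity
  have hc1 : c ≤ 1 := min_le_right x 1
  have hcx : c ≤ x := min_le_left x 1
  refine Summable.of_nonneg_of_le (fun m => by positivity) (fun m => ?_)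
    (summable_inv_sq_shift.mul_left (c⁻¹ ^ 2))
  have h0 : (0:ℝ) ≤ m := Nat.cast_nonneg m
  have h1 : c * ((m : ℝ) + 1) ≤ x + m := by nlinarith
  have h2 : (0:ℝ) < c * ((m : ℝ) + 1) := by positivity
  have hb : (1:ℝ)/(x+m)^2 ≤ 1/((c*((m:ℝ)+1))^2) :=
    one_div_le_one_div_of_le (by positivity) (pow_le_pow_left₀ h2.le h1 2)
  calc (1:ℝ)/(x+m)^2 ≤ 1/((c*((m:ℝ)+1))^2) := hb
    _ = c⁻¹ ^ 2 * (((m : ℝ) + 1) ^ 2)⁻¹ := by rw [mul_pow, one_div, mul_inv, inv_pow]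

lemma hasSum_polygamma_one {x : ℝ} (hx : 0 < x) :
    HasSum (fun m : ℕ => 1 / (x + m) ^ 2) (polygamma 1 x) := by
  rw [polygamma_one_eq hx]
  exact (summable_inv_sq_add hx).hasSum

lemma hasSum_telescope {x : ℝ} (hx : 0 < x) :
    HasSum (fun m : ℕ => 1 / ((x + m) * (x + m + 1))) (1 / x) := by
  rw [hasSum_iff_tendsto_nat_of_nonneg (fun m => by positivity)]
  have heq : ∀ n : ℕ, ∑ m ∈ Finset.range n, 1 / ((x + m) * (x + m + 1))
      = 1 / x - 1 / (x + n) := by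
    intro n
    have h := Finset.sum_range_sub' (f := fun m : ℕ => 1 / (x + m)) n
    push_cast at h
    simp only [add_zero] at h
    rw [← h]
    apply Finset.sum_congr rfl
    intro m _
    have h1 : (0:ℝ) < x + m := by positivity
    rw [div_sub_div _ _ (by positivity) (by positivity : x + ((m:ℝ)+1) ≠ 0)]
    rw [show x + ((m:ℝ) + 1) = x + m + 1 by ring]
    congr 1
    ring
  simp_rw [heq]
  have : Tendsto (fun n : ℕ => 1 / (x + n)) atTop (𝓝 0) := by
    have h1 : Tendsto (fun n : ℕ => (x + n : ℝ)) atTop atTop :=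
      tendsto_atTop_add_const_left _ x tendsto_natCast_atTop_atTop
    simpa [one_div, Function.comp_def] using tendsto_inv_atTop_zero.comp h1
  simpa using tendsto_const_nhds.sub this

lemma term_lower {x y : ℝ} (hx : 0 < x) (hxy : x ≤ y) :
    1 / (x * (x + 1)) - 1 / (y * (y + 1)) ≤ 1 / x ^ 2 - 1 / y ^ 2 := by
  have hy : 0 < y := hx.trans_le hxy
  have e1 : 1 / x ^ 2 - 1 / (x * (x + 1)) = 1 / (x ^ 2 * (x + 1)) := by
    field_simp
    ring
  have e2 : 1 / y ^ 2 - 1 / (y * (y + 1)) = 1 / (y ^ 2 * (y + 1)) := by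
    field_simp
    ring
  have h3 : 1 / (y ^ 2 * (y + 1)) ≤ 1 / (x ^ 2 * (x + 1)) := by
    apply one_div_le_one_div_of_le (by positivity)
    have h1 : x ^ 2 ≤ y ^ 2 := by nlinarith
    have h2 : x + 1 ≤ y + 1 := by linarith
    exact mul_le_mul h1 h2 (by positivity) (by positivity)
  linarith

lemma term_upper {a x y : ℝ} (ha : 0 < a) (hax : a ≤ x) (hxy : x ≤ y) :
    1 / x ^ 2 - 1 / y ^ 2 ≤ (1 + 2 / a) * (1 / (x * (x + 1)) - 1 / (y * (y + 1))) := by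
  have hx : 0 < x := ha.trans_le hax
  have hy : 0 < y := hx.trans_le hxy
  have key : a * ((x + y) * ((x + 1) * (y + 1))) ≤ (a + 2) * ((x + y + 1) * (x * y)) := by
    nlinarith [mul_nonneg (mul_nonneg (sub_nonneg.2 hax) hy.le) hy.le,
      mul_nonneg (mul_nonneg (sub_nonneg.2 (hax.trans hxy)) hx.le) hx.le,
      mul_nonneg (mul_nonneg (sub_nonneg.2 (hax.trans hxy)) hx.le) hy.le,
      mul_nonneg (sub_nonneg.2 (hax.trans hxy)) hx.le,
      mul_nonneg (sub_nonneg.2 hax) hy.le,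
      mul_nonneg (mul_nonneg hx.le hx.le) hy.le]
  have e1 : 1 / x ^ 2 - 1 / y ^ 2 = ((y - x) * (y + x)) / (x ^ 2 * y ^ 2) := by
    field_simp
    ring
  have e2 : 1 / (x * (x + 1)) - 1 / (y * (y + 1))
      = ((y - x) * (x + y + 1)) / ((x * (x + 1)) * (y * (y + 1))) := by
    field_simp
    ring
  have e3 : (1 + 2 / a) = (a + 2) / a := by field_simp
  rw [e1, e2, e3, div_mul_div_comm, div_le_div_iff₀ (by positivity) (by positivity)]
  have hkey2 := mul_le_mul_of_nonneg_left key
    (mul_nonneg (mul_nonneg (sub_nonneg.2 hxy) hx.le) hy.le)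
  nlinarith [hkey2]

theorem trigamma_diff_bounds (a b : ℝ) (ha : 0 < a) (hb : 0 < b) :
    b / (a * (a + b)) ≤ polygamma 1 a - polygamma 1 (a + b) ∧
    polygamma 1 a - polygamma 1 (a + b) ≤ (1 + 2 / a) * (b / (a * (a + b))) := by
  have hab : 0 < a + b := by linarith
  have hdiff := (hasSum_polygamma_one ha).sub (hasSum_polygamma_one hab)
  have hlow := (hasSum_telescope ha).sub (hasSum_telescope hab)
  have hkey : b / (a * (a + b)) = 1 / a - 1 / (a + b) := by
    field_simp
    ring
  have hm : ∀ m : ℕ, (0:ℝ) ≤ m := fun m => Nat.cast_nonneg m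
  constructor
  · rw [hkey]
    refine hasSum_le (fun m => ?_) hlow hdiff
    exact term_lower (x := a + m) (y := a + b + m) (by positivity) (by linarith [hm m])
  · rw [hkey]
    refine hasSum_le (fun m => ?_) hdiff (hlow.mul_left (1 + 2 / a))
    exact term_upper (x := a + m) (y := a + b + m) ha (by linarith [hm m]) (by linarith [hm m])
end

section
/- For all positive real numbers a, b, |ψ_1(a) + ψ_1(b) - 4ψ_1(a+b)| ≤ (6 + (a-b)²/min(a,b))·min(a,b)^{-2}, where ψ_1 is the trigamma function. -/
open MeasureTheory

section TrigammaAux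

open Real Set Filter Topology

noncomputable def tgF : ℝ → ℝ := fun x => Real.log (Real.Gamma x)
noncomputable def tgPsi : ℝ → ℝ := deriv tgF
noncomputable def tgPsi1 : ℝ → ℝ := deriv tgPsi
noncomputable def tgS (x : ℝ) : ℝ := ∑' n : ℕ, ((x + n) ^ 2)⁻¹
noncomputable def tgl (x : ℝ) : ℝ := tgPsi1 x - tgS x

lemma gamma_analytic {x : ℝ} (hx : 0 < x) : AnalyticAt ℝ Real.Gamma x := by
  have hset : IsOpen {s : ℂ | 0 < s.re} := isOpen_lt continuous_const Complex.continuous_re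
  have hdiff : DifferentiableOn ℂ Complex.Gamma {s : ℂ | 0 < s.re} := by
    intro s hs
    refine (Complex.differentiableAt_Gamma s fun m => ?_).differentiableWithinAt
    intro h
    rw [h] at hs
    simp only [mem_setOf_eq, Complex.neg_re, Complex.natCast_re] at hs
    have : (0:ℝ) ≤ m := m.cast_nonneg
    linarith
  have h1 : AnalyticAt ℂ Complex.Gamma (x : ℂ) := by
    refine hdiff.analyticAt (hset.mem_nhds ?_)
    simpa using hx
  have h2 : AnalyticAt ℝ (fun y : ℝ => (Complex.Gamma (y : ℂ)).re) x := by
    exact (Complex.reCLM.analyticAt _).comp ((h1.restrictScalars).comp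
      (Complex.ofRealCLM.analyticAt x))
  refine h2.congr (Filter.Eventually.of_forall fun y => ?_)
  simp only []; rw [Complex.Gamma_ofReal, Complex.ofReal_re]

lemma tgFc (n : ℕ) {x : ℝ} (hx : 0 < x) : ContDiffAt ℝ n tgF x := by
  have h1 : ContDiffAt ℝ n Real.log (Real.Gamma x) :=
    Real.contDiffAt_log.mpr (Real.Gamma_pos_of_pos hx).ne'
  exact h1.comp x ((gamma_analytic hx).contDiffAt)

lemma cd_deriv {f : ℝ → ℝ} {x : ℝ} (n : ℕ) (hf : ContDiffAt ℝ (n+1) f x) :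
    ContDiffAt ℝ n (deriv f) x := by
  have h := hf.fderiv_right (m := n) (by exact_mod_cast le_rfl)
  have h2 : ContDiffAt ℝ n (fun y => fderiv ℝ f y 1) x := h.clm_apply contDiffAt_const
  refine h2.congr_of_eventuallyEq (Filter.Eventually.of_forall fun y => ?_)
  exact (fderiv_apply_one_eq_deriv).symm

lemma tgpsic (n : ℕ) {x : ℝ} (hx : 0 < x) : ContDiffAt ℝ n tgPsi x := cd_deriv n (tgFc (n+1) hx)

lemma tgFd {x : ℝ} (hx : 0 < x) : DifferentiableAt ℝ tgF x :=
  (tgFc 1 hx).differentiableAt (by norm_num)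

lemma tgpsid {x : ℝ} (hx : 0 < x) : DifferentiableAt ℝ tgPsi x :=
  (tgpsic 1 hx).differentiableAt (by norm_num)

lemma tgpsi1cont {x : ℝ} (hx : 0 < x) : ContinuousAt tgPsi1 x :=
  (cd_deriv 0 (tgpsic 1 hx)).continuousAt

lemma tgF_rec {x : ℝ} (hx : 0 < x) : tgF (x + 1) = tgF x + Real.log x := by
  simp only [tgF, Real.Gamma_add_one hx.ne', Real.log_mul hx.ne'
    (Real.Gamma_pos_of_pos hx).ne']
  ring

lemma tgpsi_rec {x : ℝ} (hx : 0 < x) : tgPsi (x + 1) = tgPsi x + x⁻¹ := by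
  have h1 : deriv (fun y => tgF (y + 1)) x = tgPsi (x + 1) := deriv_comp_add_const tgF 1 x
  have h2 : deriv (fun y => tgF y + Real.log y) x = tgPsi x + x⁻¹ := by
    rw [deriv_fun_add (tgFd hx) (Real.differentiableAt_log hx.ne'), Real.deriv_log, tgPsi]
  rw [← h1, ← h2]
  apply Filter.EventuallyEq.deriv_eq
  filter_upwards [eventually_gt_nhds hx] with y hy using tgF_rec hy

lemma tgpsi1_rec {x : ℝ} (hx : 0 < x) : tgPsi1 (x + 1) = tgPsi1 x - (x ^ 2)⁻¹ := by
  have h1 : deriv (fun y => tgPsi (y + 1)) x = tgPsi1 (x + 1) := deriv_comp_add_const tgPsi 1 x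
  have h2 : deriv (fun y => tgPsi y + y⁻¹) x = tgPsi1 x - (x ^ 2)⁻¹ := by
    rw [deriv_fun_add (tgpsid hx) (differentiableAt_inv hx.ne'), deriv_inv, tgPsi1]
    ring
  rw [← h1, ← h2]
  apply Filter.EventuallyEq.deriv_eq
  filter_upwards [eventually_gt_nhds hx] with y hy using tgpsi_rec hy

lemma tgF_dup {x : ℝ} (hx : 0 < x) :
    tgF x + tgF (x + 1/2) = (1 - 2*x) * Real.log 2 + Real.log (Real.sqrt π) + tgF (2*x) := by
  have h := Real.Gamma_mul_Gamma_add_half x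
  have h1 : Real.log (Real.Gamma x * Real.Gamma (x + 1/2))
      = Real.log (Real.Gamma (2*x) * (2:ℝ) ^ (1 - 2*x) * Real.sqrt π) := by rw [h]
  rw [Real.log_mul (Real.Gamma_pos_of_pos hx).ne'
      (Real.Gamma_pos_of_pos (by linarith)).ne',
    Real.log_mul (by positivity) (by positivity),
    Real.log_mul (Real.Gamma_pos_of_pos (by linarith)).ne' (by positivity),
    Real.log_rpow two_pos] at h1
  simp only [tgF]
  linarith


lemma tghasDerivAt_psi {x : ℝ} (hx : 0 < x) : HasDerivAt tgPsi (tgPsi1 x) x :=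
  (tgpsid hx).hasDerivAt

lemma tghasDerivAt_F {x : ℝ} (hx : 0 < x) : HasDerivAt tgF (tgPsi x) x :=
  (tgFd hx).hasDerivAt

lemma dup_step {g g1 : ℝ → ℝ} (c d k : ℝ)
    (hg1 : ∀ {x : ℝ}, 0 < x → HasDerivAt g (g1 x) x)
    (heq : ∀ {x : ℝ}, 0 < x → g x + g (x + 1/2) = c + d * x + k * g (2*x))
    {x : ℝ} (hx : 0 < x) :
    g1 x + g1 (x + 1/2) = d + 2 * k * g1 (2*x) := by
  have hL : HasDerivAt (fun y => g y + g (y + 1/2)) (g1 x + g1 (x + 1/2)) x :=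
    (hg1 hx).add ((hg1 (by linarith)).comp_add_const)
  have hR0 : HasDerivAt (fun y => g (2*y)) (g1 (2*x) * 2) x := by
    simpa [Function.comp_def] using (hg1 (by linarith : (0:ℝ) < 2*x)).comp x ((hasDerivAt_id x).const_mul 2)
  have hR : HasDerivAt (fun y => c + d * y + k * g (2*y))
      (d + 2 * k * g1 (2*x)) x := by
    have := (((hasDerivAt_id x).const_mul d).const_add c).add (hR0.const_mul k)
    refine this.congr_deriv ?_
    ring
  have hE : (fun y => g y + g (y + 1/2)) =ᶠ[nhds x] (fun y => c + d * y + k * g (2*y)) := by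
    filter_upwards [eventually_gt_nhds hx] with y hy using heq hy
  exact (hL.congr_of_eventuallyEq hE.symm).unique hR

lemma tgpsi_dup {x : ℝ} (hx : 0 < x) :
    tgPsi x + tgPsi (x + 1/2) = -2 * Real.log 2 + 2 * tgPsi (2*x) := by
  have := dup_step (Real.log 2 + Real.log (Real.sqrt π)) (-2 * Real.log 2) 1
    (fun {y} hy => tghasDerivAt_F hy) (fun {y} hy => by rw [tgF_dup hy]; ring) hx
  linarith [this]

lemma tgpsi1_dup {x : ℝ} (hx : 0 < x) :
    tgPsi1 x + tgPsi1 (x + 1/2) = 4 * tgPsi1 (2*x) := by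
  have := dup_step (-2 * Real.log 2) 0 2
    (fun {y} hy => tghasDerivAt_psi hy) (fun {y} hy => by rw [tgpsi_dup hy]; ring) hx
  linarith [this]

lemma tgpsi_mono : MonotoneOn tgPsi (Ioi 0) := by
  have h := Real.convexOn_log_Gamma.monotoneOn_deriv (fun y hy => tgFd hy)
  have : (Real.log ∘ Real.Gamma) = tgF := rfl
  rwa [this] at h

lemma tgpsi1_nonneg {x : ℝ} (hx : 0 < x) : 0 ≤ tgPsi1 x := by
  have hd : HasDerivAt tgPsi (tgPsi1 x) x := (tgpsid hx).hasDerivAt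
  have hslope : Tendsto (slope tgPsi x) (nhdsWithin x (Ioi x)) (nhds (tgPsi1 x)) :=
    (hasDerivAt_iff_tendsto_slope.mp hd).mono_left
      (nhdsWithin_mono x fun y hy => ne_of_gt hy)
  refine ge_of_tendsto hslope ?_
  filter_upwards [self_mem_nhdsWithin] with y hy
  have hy' : x < y := hy
  have hmono := tgpsi_mono (mem_Ioi.mpr hx) (mem_Ioi.mpr (hx.trans hy')) hy'.le
  rw [slope_def_field]
  apply div_nonneg (by linarith) (by linarith)

lemma tgS_summable {x : ℝ} (hx : 0 < x) : Summable (fun n : ℕ => ((x + n) ^ 2)⁻¹) := by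
  have hbase : Summable (fun n : ℕ => (((n:ℝ)+1) ^ 2)⁻¹) := by
    have h : Summable (fun n : ℕ => ((n:ℝ) ^ 2)⁻¹) := by
      simpa [one_div] using Real.summable_one_div_nat_pow.mpr one_lt_two
    exact_mod_cast (summable_nat_add_iff 1).mpr h
  have h2 : Summable (fun n : ℕ => ((x + ↑(n + 1)) ^ 2)⁻¹) := by
    refine Summable.of_nonneg_of_le (fun n => by positivity) (fun n => ?_) hbase
    apply inv_anti₀ (by positivity)
    have : ((n : ℝ) + 1) ≤ x + ↑(n+1) := by push_cast; linarith
    nlinarith [Nat.cast_nonneg (α := ℝ) n]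
  exact (summable_nat_add_iff 1).mp h2

lemma tele_upper {a : ℝ} (ha : 0 < a) : (((a+1)) ^ 2)⁻¹ ≤ a⁻¹ - (a+1)⁻¹ := by
  have h1 : a⁻¹ - (a+1)⁻¹ = (a*(a+1))⁻¹ := by
    field_simp
    ring
  rw [h1]
  apply inv_anti₀ (by positivity)
  nlinarith

lemma tele_lower {a : ℝ} (ha : 0 < a) : a⁻¹ - (a+1)⁻¹ ≤ (a ^ 2)⁻¹ := by
  have h1 : a⁻¹ - (a+1)⁻¹ = (a*(a+1))⁻¹ := by field_simp; ring
  rw [h1]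
  apply inv_anti₀ (by positivity)
  nlinarith

lemma tgS_lower {x : ℝ} (hx : 0 < x) : x⁻¹ ≤ tgS x := by
  have key : ∀ N : ℕ, x⁻¹ - (x + N)⁻¹ ≤ tgS x := by
    intro N
    have h1 : ∑ k ∈ Finset.range N, ((x + k)⁻¹ - (x + (k+1))⁻¹) = x⁻¹ - (x + N)⁻¹ := by
      have := Finset.sum_range_sub' (fun k : ℕ => (x + k)⁻¹) N
      simpa using this
    have h2 : ∑ k ∈ Finset.range N, ((x + k)⁻¹ - (x + (k+1))⁻¹)
        ≤ ∑ k ∈ Finset.range N, ((x + k) ^ 2)⁻¹ := by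
      refine Finset.sum_le_sum fun k _ => ?_
      have hk : (0:ℝ) < x + k := by positivity
      have := tele_lower hk
      refine le_of_eq_of_le ?_ (this.trans_eq ?_) <;> push_cast <;> ring
    have h3 : ∑ k ∈ Finset.range N, ((x + k) ^ 2)⁻¹ ≤ tgS x :=
      Summable.sum_le_tsum _ (fun k _ => by positivity) (tgS_summable hx)
    linarith
  have hlim : Tendsto (fun N : ℕ => x⁻¹ - (x + N)⁻¹) atTop (nhds (x⁻¹ - 0)) := by
    refine Tendsto.const_sub _ ?_
    exact (tendsto_atTop_add_const_left _ x tendsto_natCast_atTop_atTop).inv_tendsto_atTop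
  rw [sub_zero] at hlim
  exact le_of_tendsto' hlim key

lemma tgS_upper {x : ℝ} (hx : 0 < x) : tgS x ≤ (x ^ 2)⁻¹ + x⁻¹ := by
  refine tsum_le_of_sum_range_le (fun n => by positivity) fun N => ?_
  match N with
  | 0 => simp; positivity
  | (M+1) =>
    rw [Finset.sum_range_succ']
    have h2 : ∑ k ∈ Finset.range M, ((x + (k+1 : ℕ)) ^ 2)⁻¹
        ≤ ∑ k ∈ Finset.range M, ((x + k)⁻¹ - (x + (k+1))⁻¹) := by
      refine Finset.sum_le_sum fun k _ => ?_
      have hk : (0:ℝ) < x + k := by positivity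
      have := tele_upper hk
      refine le_of_eq_of_le ?_ (this.trans_eq ?_) <;> push_cast <;> ring
    have h1 : ∑ k ∈ Finset.range M, ((x + k)⁻¹ - (x + (k+1))⁻¹) = x⁻¹ - (x + M)⁻¹ := by
      have := Finset.sum_range_sub' (fun k : ℕ => (x + k)⁻¹) M
      simpa using this
    have h4 : (0:ℝ) < x + M := by positivity
    have h5 : (0:ℝ) ≤ (x + M)⁻¹ := by positivity
    simp only [Nat.cast_zero, add_zero]
    linarith

lemma tgS_rec {x : ℝ} (hx : 0 < x) : tgS x = (x ^ 2)⁻¹ + tgS (x + 1) := by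
  rw [tgS, Summable.tsum_eq_zero_add (tgS_summable hx)]
  congr 1
  · norm_num
  · rw [tgS]
    apply tsum_congr
    intro n
    push_cast
    ring_nf

lemma tgS_dup {x : ℝ} (hx : 0 < x) : tgS x + tgS (x + 1/2) = 4 * tgS (2*x) := by
  have h2x : (0:ℝ) < 2*x := by linarith
  set f : ℕ → ℝ := fun m => ((2*x + m) ^ 2)⁻¹ with hf
  have heven : (fun k : ℕ => f (2*k)) = fun k : ℕ => (1/4) * ((x + k) ^ 2)⁻¹ := by
    funext k
    simp only [hf]
    push_cast
    rw [show (2*x + 2*(k:ℝ))^2 = 4 * (x + k)^2 by ring, mul_inv, one_div]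
  have hodd : (fun k : ℕ => f (2*k+1)) = fun k : ℕ => (1/4) * ((x + 1/2 + k) ^ 2)⁻¹ := by
    funext k
    simp only [hf]
    push_cast
    rw [show (2*x + (2*(k:ℝ)+1))^2 = 4 * (x + 1/2 + k)^2 by ring, mul_inv, one_div]
    norm_num
  have hse : Summable (fun k : ℕ => f (2*k)) := by
    rw [heven]; exact (tgS_summable hx).mul_left _
  have hso : Summable (fun k : ℕ => f (2*k+1)) := by
    rw [hodd]; exact (tgS_summable (by linarith : (0:ℝ) < x + 1/2)).mul_left _
  have key := tsum_even_add_odd hse hso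
  have h1 : ∑' k : ℕ, f (2*k) = (1/4) * tgS x := by rw [heven, tsum_mul_left, tgS]
  have h2 : ∑' k : ℕ, f (2*k+1) = (1/4) * tgS (x + 1/2) := by rw [hodd, tsum_mul_left, tgS]
  have h3 : ∑' m : ℕ, f m = tgS (2*x) := rfl
  rw [h1, h2, h3] at key
  linarith

lemma tgpsi1_partial {x : ℝ} (hx : 0 < x) (N : ℕ) :
    tgPsi1 x = (∑ k ∈ Finset.range N, ((x + k) ^ 2)⁻¹) + tgPsi1 (x + N) := by
  induction N with
  | zero => simp
  | succ n ih =>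
    have hxn : (0:ℝ) < x + n := by positivity
    have h := tgpsi1_rec hxn
    rw [Finset.sum_range_succ]
    have hc : x + ↑(n+1) = (x + n) + 1 := by push_cast; ring
    rw [hc, h, ih]
    ring

lemma tgl_tendsto {x : ℝ} (hx : 0 < x) :
    Tendsto (fun N : ℕ => tgPsi1 (x + N)) atTop (nhds (tgl x)) := by
  have hsum : Tendsto (fun N : ℕ => ∑ k ∈ Finset.range N, ((x + k) ^ 2)⁻¹) atTop
      (nhds (tgS x)) := (tgS_summable hx).hasSum.tendsto_sum_nat
  have h : (fun N : ℕ => tgPsi1 (x + N))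
      = fun N : ℕ => tgPsi1 x - ∑ k ∈ Finset.range N, ((x + k) ^ 2)⁻¹ := by
    funext N
    have := tgpsi1_partial hx N
    linarith
  rw [h, tgl]
  exact (tendsto_const_nhds).sub hsum

lemma tgl_nonneg {x : ℝ} (hx : 0 < x) : 0 ≤ tgl x :=
  ge_of_tendsto' (tgl_tendsto hx) (fun N => tgpsi1_nonneg (by positivity))

lemma tgl_per {x : ℝ} (hx : 0 < x) : tgl (x + 1) = tgl x := by
  have h1 := tgpsi1_rec hx
  have h2 := tgS_rec hx
  simp only [tgl]
  rw [h1, h2]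
  ring

lemma tgl_dup {x : ℝ} (hx : 0 < x) : tgl x + tgl (x + 1/2) = 4 * tgl (2*x) := by
  have h1 := tgpsi1_dup hx
  have h2 := tgS_dup hx
  simp only [tgl]
  linarith

lemma tgS_nonneg {x : ℝ} (hx : 0 < x) : 0 ≤ tgS x :=
  le_trans (by positivity) (tgS_lower hx)

lemma tgl_zero {x : ℝ} (hx : 0 < x) : tgl x = 0 := by
  obtain ⟨z, hz, hmax⟩ := isCompact_Icc.exists_isMaxOn (Set.nonempty_Icc.mpr one_le_two)
    (fun t ht => (tgpsi1cont (lt_of_lt_of_le one_pos ht.1)).continuousWithinAt :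
      ContinuousOn tgPsi1 (Icc (1:ℝ) 2))
  set C := tgPsi1 z with hC
  have hbase : ∀ t ∈ Icc (1:ℝ) 2, tgl t ≤ C := by
    intro t ht
    have ht0 : (0:ℝ) < t := lt_of_lt_of_le one_pos ht.1
    have := tgS_nonneg ht0
    have h3 : tgPsi1 t ≤ tgPsi1 z := hmax ht
    simp only [tgl]
    linarith
  have hall : ∀ y : ℝ, 0 < y → tgl y ≤ C := by
    have key : ∀ n : ℕ, ∀ y : ℝ, 0 < y → y ≤ n → tgl y ≤ C := by
      intro n
      induction n with
      | zero => intro y hy hyn; exact absurd (hy.trans_le hyn) (by norm_num)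
      | succ n ih =>
        intro y hy hyn
        rcases le_or_gt y 1 with h1 | h1
        · rw [← tgl_per hy]
          exact hbase _ ⟨by linarith, by linarith⟩
        rcases le_or_gt y 2 with h2 | h2
        · exact hbase _ ⟨h1.le, h2⟩
        · have hy1 : (0:ℝ) < y - 1 := by linarith
          have : tgl y = tgl (y - 1) := by
            have := tgl_per hy1
            simpa [sub_add_cancel] using this
          rw [this]
          apply ih _ hy1
          push_cast at hyn ⊢
          linarith
    intro y hy
    exact key ⌈y⌉₊ y hy (Nat.le_ceil y)
  have hhalf : ∀ n : ℕ, ∀ y : ℝ, 0 < y → tgl y ≤ C / 2 ^ n := by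
    intro n
    induction n with
    | zero => simpa using hall
    | succ n ih =>
      intro y hy
      have hy2 : (0:ℝ) < y/2 := by linarith
      have hdup := tgl_dup hy2
      rw [show 2 * (y/2) = y by ring] at hdup
      have i1 := ih (y/2) hy2
      have i2 := ih (y/2 + 1/2) (by linarith)
      have hpow : (2:ℝ) ^ (n+1) = 2 * 2 ^ n := by ring
      have hp : (0:ℝ) < 2 ^ n := by positivity
      rw [hpow]
      rw [div_mul_eq_div_div_swap]
      linarith
  have hlim : Tendsto (fun n : ℕ => C / 2 ^ n) atTop (nhds 0) := by
    have h := tendsto_pow_atTop_nhds_zero_of_lt_one (by norm_num : (0:ℝ) ≤ 1/2)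
      (by norm_num : (1/2:ℝ) < 1)
    have := h.const_mul C
    rw [mul_zero] at this
    refine this.congr fun n => ?_
    rw [div_pow, one_pow, mul_one_div]
  have hle : tgl x ≤ 0 := ge_of_tendsto' hlim (fun n => hhalf n x hx)
  exact le_antisymm hle (tgl_nonneg hx)

lemma tgpsi1_eq_S {x : ℝ} (hx : 0 < x) : tgPsi1 x = tgS x := by
  have := tgl_zero hx
  simp only [tgl] at this
  linarith

lemma tgpsi1_est {x : ℝ} (hx : 0 < x) : |tgPsi1 x - x⁻¹| ≤ (x ^ 2)⁻¹ := by
  rw [tgpsi1_eq_S hx]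
  rw [abs_le]
  constructor
  · have h := tgS_lower hx
    have : (0:ℝ) ≤ (x^2)⁻¹ := by positivity
    linarith
  · have h := tgS_upper hx
    linarith

lemma polygamma_one_eq_s4 {z : ℝ} : polygamma 1 z = tgPsi1 z := by
  rw [polygamma, iteratedDeriv_succ, iteratedDeriv_one]
  rfl

end TrigammaAux

theorem trigamma_sum_bound (a b : ℝ) (ha : 0 < a) (hb : 0 < b) :
    |polygamma 1 a + polygamma 1 b - 4 * polygamma 1 (a + b)| ≤
      (6 + (a - b) ^ 2 / min a b) / (min a b) ^ 2 := by
  set m := min a b with hm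
  have hm0 : 0 < m := lt_min ha hb
  have hma : m ≤ a := min_le_left a b
  have hmb : m ≤ b := min_le_right a b
  have hab : 0 < a + b := by linarith
  rw [polygamma_one_eq_s4, polygamma_one_eq_s4, polygamma_one_eq_s4]
  have E1 := tgpsi1_est ha
  have E2 := tgpsi1_est hb
  have E3 := tgpsi1_est hab
  have hR : a⁻¹ + b⁻¹ - 4 * (a+b)⁻¹ = (a-b)^2 / (a*b*(a+b)) := by
    field_simp
    ring
  have key : |tgPsi1 a + tgPsi1 b - 4 * tgPsi1 (a + b)| ≤
      (a^2)⁻¹ + (b^2)⁻¹ + 4 * ((a+b)^2)⁻¹ + (a-b)^2 / (a*b*(a+b)) := by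
    have hre : tgPsi1 a + tgPsi1 b - 4 * tgPsi1 (a + b)
        = (tgPsi1 a - a⁻¹) + (tgPsi1 b - b⁻¹) - 4 * (tgPsi1 (a+b) - (a+b)⁻¹)
          + (a⁻¹ + b⁻¹ - 4 * (a+b)⁻¹) := by ring
    rw [hre, hR]
    have h4 : |(4:ℝ) * (tgPsi1 (a+b) - (a+b)⁻¹)| ≤ 4 * ((a+b)^2)⁻¹ := by
      rw [abs_mul]
      rw [abs_of_nonneg (by norm_num : (0:ℝ) ≤ 4)]
      linarith
    have hRnn : (0:ℝ) ≤ (a-b)^2 / (a*b*(a+b)) := by positivity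
    calc |(tgPsi1 a - a⁻¹) + (tgPsi1 b - b⁻¹) - 4 * (tgPsi1 (a+b) - (a+b)⁻¹)
          + (a-b)^2 / (a*b*(a+b))|
        ≤ |(tgPsi1 a - a⁻¹) + (tgPsi1 b - b⁻¹) - 4 * (tgPsi1 (a+b) - (a+b)⁻¹)|
          + |(a-b)^2 / (a*b*(a+b))| := abs_add_le _ _
      _ ≤ |(tgPsi1 a - a⁻¹) + (tgPsi1 b - b⁻¹)| + |4 * (tgPsi1 (a+b) - (a+b)⁻¹)|
          + |(a-b)^2 / (a*b*(a+b))| := by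
          have := abs_sub ((tgPsi1 a - a⁻¹) + (tgPsi1 b - b⁻¹))
            (4 * (tgPsi1 (a+b) - (a+b)⁻¹))
          linarith
      _ ≤ |tgPsi1 a - a⁻¹| + |tgPsi1 b - b⁻¹| + |4 * (tgPsi1 (a+b) - (a+b)⁻¹)|
          + |(a-b)^2 / (a*b*(a+b))| := by
          have := abs_add_le (tgPsi1 a - a⁻¹) (tgPsi1 b - b⁻¹)
          linarith
      _ ≤ (a^2)⁻¹ + (b^2)⁻¹ + 4 * ((a+b)^2)⁻¹ + (a-b)^2 / (a*b*(a+b)) := by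
          rw [abs_of_nonneg hRnn]
          linarith
  have b1 : (a^2)⁻¹ ≤ (m^2)⁻¹ := by
    apply inv_anti₀ (by positivity)
    nlinarith
  have b2 : (b^2)⁻¹ ≤ (m^2)⁻¹ := by
    apply inv_anti₀ (by positivity)
    nlinarith
  have b3 : 4 * ((a+b)^2)⁻¹ ≤ (m^2)⁻¹ := by
    have h1 : ((a+b)^2)⁻¹ ≤ (4*m^2)⁻¹ := by
      apply inv_anti₀ (by positivity)
      nlinarith
    have h2 : (4*m^2)⁻¹ = (m^2)⁻¹ / 4 := by
      rw [mul_inv]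
      ring
    rw [h2] at h1
    linarith
  have b4 : (a-b)^2 / (a*b*(a+b)) ≤ (a-b)^2 / (m^3) := by
    apply div_le_div_of_nonneg_left (by positivity) (by positivity)
    have h1 : m * m ≤ a * b := mul_le_mul hma hmb hm0.le ha.le
    have h2 : m ≤ a + b := by linarith
    calc m ^ 3 = (m * m) * m := by ring
      _ ≤ (a * b) * (a + b) := mul_le_mul h1 h2 hm0.le (by positivity)
  have hfin : (6 + (a - b) ^ 2 / m) / m ^ 2 = 6 * (m^2)⁻¹ + (a-b)^2 / m^3 := by
    field_simp
  rw [hfin]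
  have hmnn : (0:ℝ) ≤ (m^2)⁻¹ := by positivity
  linarith
end

section
/- For every integer n ≥ 1 and all z > 0, the polygamma function |ψ_n| is log-convex: |ψ_n((a+b)/2)| ≤ √(|ψ_n(a)|·|ψ_n(b)|) ≤ (|ψ_n(a)| + |ψ_n(b)|)/2 for all a, b > 0. -/
open MeasureTheory

section PolygammaAux

open Real Filter Topology Finset Set


noncomputable def pgS (m : ℕ) (x : ℝ) : ℝ := ∑' k : ℕ, ((x + k) ^ m)⁻¹

lemma pgS_summable {m : ℕ} (hm : 2 ≤ m) {x : ℝ} (hx : 0 < x) :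
    Summable fun k : ℕ => ((x + k) ^ m)⁻¹ := by
  rw [← summable_nat_add_iff 1]
  have hs : Summable fun k : ℕ => (((k : ℝ) + 1) ^ m)⁻¹ := by
    simpa using (summable_nat_add_iff 1).2 (Real.summable_nat_pow_inv.2 hm)
  refine hs.of_nonneg_of_le (fun k => by positivity) (fun k => ?_)
  have h1 : (0:ℝ) < (k:ℝ) + 1 := by positivity
  have h2 : ((k:ℝ) + 1) ^ m ≤ (x + ((k:ℕ):ℝ) + 1) ^ m := by
    gcongr <;> linarith
  push_cast
  rw [show x + ((k:ℝ)+1) = x + (k:ℝ) + 1 from by ring]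
  exact inv_anti₀ (by positivity) h2

lemma pgS_nonneg (m : ℕ) {x : ℝ} (hx : 0 < x) : 0 ≤ pgS m x :=
  tsum_nonneg fun k => by positivity

lemma pg_term_hasDerivAt {m : ℕ} (hm : 1 ≤ m) (k : ℕ) {y : ℝ} (hy : 0 < y + k) :
    HasDerivAt (fun z : ℝ => ((z + k) ^ m)⁻¹) (-(m : ℝ) * ((y + k) ^ (m + 1))⁻¹) y := by
  have h1 : HasDerivAt (fun z : ℝ => z + (k : ℝ)) 1 y := (hasDerivAt_id y).add_const _
  have h2 := (h1.pow m).inv (pow_ne_zero m hy.ne')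
  refine HasDerivAt.congr_deriv h2 (Eq.symm ?_)
  simp only [Pi.pow_apply]
  rw [mul_one, eq_div_iff (by positivity)]
  have hpow : ((y+(k:ℝ))^m)^2 = (y+(k:ℝ))^(m+1) * (y+(k:ℝ))^(m-1) := by
    rw [← pow_mul, ← pow_add]; congr 1; omega
  rw [hpow]
  have h3 : ((y+(k:ℝ))^(m+1)) ≠ 0 := by positivity
  field_simp

lemma pgS_hasDerivAt {m : ℕ} (hm : 2 ≤ m) {x : ℝ} (hx : 0 < x) :
    HasDerivAt (pgS m) (-(m : ℝ) * pgS (m+1) x) x := by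
  have key : HasDerivAt (fun z : ℝ => ∑' k : ℕ, ((z + k) ^ m)⁻¹)
      (∑' k : ℕ, -(m : ℝ) * ((x + k) ^ (m+1))⁻¹) x := by
    refine hasDerivAt_tsum_of_isPreconnected
      ((pgS_summable (show 2 ≤ m + 1 by omega) (half_pos hx)).mul_left (m : ℝ))
      isOpen_Ioi (convex_Ioi (x/2)).isPreconnected
      (fun k y hy => pg_term_hasDerivAt (by omega) k
        (by have hy' := mem_Ioi.1 hy
            have hk : (0:ℝ) ≤ (k:ℝ) := Nat.cast_nonneg k
            have := half_pos hx
            linarith))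
      (fun k y hy => ?_) (mem_Ioi.2 (half_lt_self hx)) (pgS_summable hm hx)
      (mem_Ioi.2 (half_lt_self hx))
    · have hy' : x/2 < y := mem_Ioi.1 hy
      have hk : (0:ℝ) ≤ (k:ℝ) := Nat.cast_nonneg k
      have h0 : (0:ℝ) < x/2 + k := by positivity
      have h0y : (0:ℝ) < y + k := by linarith
      rw [norm_mul, norm_neg, norm_inv, Real.norm_natCast,
        Real.norm_of_nonneg (pow_nonneg h0y.le _)]
      gcongr
      all_goals linarith
  have : (∑' k : ℕ, -(m : ℝ) * ((x + k) ^ (m+1))⁻¹) = -(m:ℝ) * pgS (m+1) x := tsum_mul_left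
  rw [this] at key
  exact key

noncomputable def pgT (x : ℝ) : ℝ := ∑' k : ℕ, (((k:ℝ) + 1)⁻¹ - (x + k)⁻¹)

lemma pgT_bound {x : ℝ} (hx : 0 < x) (k : ℕ) :
    |((k:ℝ) + 1)⁻¹ - (x + k)⁻¹| ≤ (|x - 1| / min x 1) * (((k:ℝ)+1)^2)⁻¹ := by
  set c := min x 1 with hc
  have hc0 : 0 < c := lt_min hx one_pos
  have hk : (0:ℝ) ≤ (k:ℝ) := Nat.cast_nonneg k
  have h1 : (0:ℝ) < (k:ℝ) + 1 := by linarith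
  have h2 : (0:ℝ) < x + k := by linarith
  have heq : ((k:ℝ) + 1)⁻¹ - (x + k)⁻¹ = (x - 1) / (((k:ℝ)+1) * (x + k)) := by
    field_simp; ring
  have heq2 : (|x - 1| / c) * (((k:ℝ)+1)^2)⁻¹ = |x - 1| / (c * ((k:ℝ)+1)^2) := by
    field_simp
  rw [heq, heq2, abs_div, abs_of_pos (by positivity : (0:ℝ) < ((k:ℝ)+1) * (x+k))]
  have h3 : c ≤ x := min_le_left _ _
  have h4 : c ≤ 1 := min_le_right _ _
  have h5 : c * ((k:ℝ)+1) ≤ x + k := by nlinarith [mul_nonneg (sub_nonneg.2 h4) hk]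
  exact div_le_div_of_nonneg_left (abs_nonneg _) (by positivity)
    (by nlinarith [mul_le_mul_of_nonneg_left h5 h1.le])

lemma pgT_summable {x : ℝ} (hx : 0 < x) :
    Summable fun k : ℕ => (((k:ℝ) + 1)⁻¹ - (x + k)⁻¹) := by
  have hs : Summable fun k : ℕ => (|x - 1| / min x 1) * (((k:ℝ)+1)^2)⁻¹ := by
    exact (((summable_nat_add_iff 1).2 (Real.summable_nat_pow_inv.2 one_lt_two)).congr
      (fun k => by push_cast; ring)).mul_left _
  exact Summable.of_abs (hs.of_nonneg_of_le (fun k => abs_nonneg _) (fun k => pgT_bound hx k))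

lemma pgT_term_hasDerivAt (k : ℕ) {y : ℝ} (hy : 0 < y + k) :
    HasDerivAt (fun z : ℝ => ((k:ℝ)+1)⁻¹ - (z + k)⁻¹) (((y + k) ^ 2)⁻¹) y := by
  have h := pg_term_hasDerivAt (m := 1) le_rfl k hy
  simp only [pow_one] at h
  have h2 := (hasDerivAt_const y (((k:ℝ)+1)⁻¹)).sub h
  refine HasDerivAt.congr_deriv h2 (Eq.symm ?_)
  ring

lemma pgT_hasDerivAt {x : ℝ} (hx : 0 < x) : HasDerivAt pgT (pgS 2 x) x := by
  have key : HasDerivAt (fun z : ℝ => ∑' k : ℕ, (((k:ℝ) + 1)⁻¹ - (z + k)⁻¹))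
      (∑' k : ℕ, ((x + k) ^ 2)⁻¹) x := by
    refine hasDerivAt_tsum_of_isPreconnected
      (pgS_summable (le_refl 2) (half_pos hx))
      isOpen_Ioi (convex_Ioi (x/2)).isPreconnected
      (fun k y hy => pgT_term_hasDerivAt k
        (by have hy' := mem_Ioi.1 hy
            have hk : (0:ℝ) ≤ (k:ℝ) := Nat.cast_nonneg k
            have := half_pos hx
            linarith))
      (fun k y hy => ?_)
      (mem_Ioi.2 (half_lt_self hx)) (pgT_summable hx) (mem_Ioi.2 (half_lt_self hx))
    have hy' : x/2 < y := mem_Ioi.1 hy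
    have hk : (0:ℝ) ≤ (k:ℝ) := Nat.cast_nonneg k
    have h0 : (0:ℝ) < x/2 + k := by positivity
    rw [Real.norm_of_nonneg (by positivity)]
    gcongr
    all_goals linarith
  exact key

noncomputable def pgL (x : ℝ) : ℝ := Real.log (Real.Gamma x)

lemma pgL_diff {x : ℝ} (hx : 0 < x) : DifferentiableAt ℝ pgL x := by
  have h : ∀ m : ℕ, x ≠ -m := fun m => by
    have : (0:ℝ) ≤ m := Nat.cast_nonneg m
    intro h; rw [h] at hx; linarith
  exact (Real.differentiableAt_Gamma h).log (Real.Gamma_pos_of_pos hx).ne'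

noncomputable def pgD : ℝ → ℝ := deriv pgL

lemma pgD_rec {x : ℝ} (hx : 0 < x) : pgD (x + 1) = pgD x + 1 / x := by
  have h_rec : ∀ y : ℝ, 0 < y → pgL (y + 1) = pgL y + Real.log y := fun y hy => by
    simp only [pgL, Real.Gamma_add_one hy.ne',
      Real.log_mul hy.ne' (Real.Gamma_pos_of_pos hy).ne']
    ring
  show deriv pgL (x + 1) = deriv pgL x + 1 / x
  rw [← deriv_comp_add_const, one_div, ← Real.deriv_log,
    ← deriv_add (pgL_diff hx) (Real.differentiableAt_log hx.ne')]
  apply Filter.EventuallyEq.deriv_eq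
  filter_upwards [eventually_gt_nhds hx] using fun y hy => h_rec y hy

lemma pgD_mono : MonotoneOn pgD (Set.Ioi 0) := by
  have h := Real.convexOn_log_Gamma.monotoneOn_deriv (fun y hy => pgL_diff hy)
  exact h

lemma pgD_sum {x : ℝ} (hx : 0 < x) (N : ℕ) :
    pgD (x + N) = pgD x + ∑ k ∈ Finset.range N, (x + k)⁻¹ := by
  induction N with
  | zero => simp
  | succ n ih =>
    have hxn : 0 < x + n := by have : (0:ℝ) ≤ n := Nat.cast_nonneg n; linarith
    have := pgD_rec hxn
    push_cast
    rw [show x + ((n:ℝ) + 1) = (x + n) + 1 by ring, this, ih, Finset.sum_range_succ]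
    rw [one_div]
    push_cast
    ring


lemma pgD_lim {x : ℝ} (hx : 0 < x) :
    Tendsto (fun N : ℕ => pgD (x + N) - pgD (1 + N)) atTop (𝓝 0) := by
  set m : ℕ := ⌈x⌉₊ with hm
  have hxm : x ≤ m + 1 := by
    have := Nat.le_ceil x
    push_cast
    linarith [this]
  have hlow : ∀ N : ℕ, 1 ≤ N → -(1 / (N:ℝ)) ≤ pgD (x + N) - pgD (1 + N) := by
    intro N hN
    have hN0 : (0:ℝ) < N := by exact_mod_cast hN
    have h1 : pgD ((N:ℝ) + 1) = pgD N + 1 / N := pgD_rec hN0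
    have h2 : pgD (N:ℝ) ≤ pgD (x + N) :=
      pgD_mono (mem_Ioi.2 hN0) (mem_Ioi.2 (by linarith)) (by linarith)
    have : (1:ℝ) + N = N + 1 := by ring
    rw [this, h1]
    linarith
  have hupp : ∀ N : ℕ, 1 ≤ N → pgD (x + N) - pgD (1 + N) ≤ (m : ℝ) / N := by
    intro N hN
    have hN0 : (0:ℝ) < N := by exact_mod_cast hN
    have h1N : (0:ℝ) < 1 + N := by linarith
    have h2 : pgD (x + N) ≤ pgD ((1 + N : ℝ) + m) := by
      apply pgD_mono (mem_Ioi.2 (by linarith)) (mem_Ioi.2 (by positivity))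
      linarith
    have h3 : pgD ((1 + N:ℝ) + m) = pgD (1 + N) + ∑ k ∈ Finset.range m, ((1 + N:ℝ) + k)⁻¹ :=
      pgD_sum h1N m
    have h4 : ∑ k ∈ Finset.range m, ((1 + N:ℝ) + k)⁻¹ ≤ (m : ℝ) / N := by
      calc ∑ k ∈ Finset.range m, ((1 + N:ℝ) + k)⁻¹
          ≤ ∑ _k ∈ Finset.range m, (N:ℝ)⁻¹ := by
            apply Finset.sum_le_sum
            intro k _
            have : (0:ℝ) ≤ k := Nat.cast_nonneg k
            exact inv_anti₀ hN0 (by linarith)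
        _ = (m : ℝ) / N := by
            rw [Finset.sum_const, Finset.card_range, nsmul_eq_mul, div_eq_mul_inv]
    linarith
  have hl : Tendsto (fun N : ℕ => -(1 / (N:ℝ))) atTop (𝓝 0) := by
    simpa using (tendsto_one_div_atTop_nhds_zero_nat (𝕜 := ℝ)).neg
  have hu : Tendsto (fun N : ℕ => (m : ℝ) / N) atTop (𝓝 0) := by
    simpa [div_eq_mul_inv] using (tendsto_one_div_atTop_nhds_zero_nat (𝕜 := ℝ)).const_mul (m : ℝ)
  refine tendsto_of_tendsto_of_tendsto_of_le_of_le' hl hu ?_ ?_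
  · filter_upwards [eventually_ge_atTop 1] using hlow
  · filter_upwards [eventually_ge_atTop 1] using hupp


lemma pgD_eq_aux : True := trivial

lemma pgD_eq {x : ℝ} (hx : 0 < x) : pgD x = pgD 1 + pgT x := by
  have h1 : Tendsto (fun N : ℕ => ∑ k ∈ Finset.range N, (((k:ℝ) + 1)⁻¹ - (x + k)⁻¹))
      atTop (𝓝 (pgT x)) := by
    simp only [pgT]
    exact (pgT_summable hx).hasSum.tendsto_sum_nat
  have h2 : ∀ N : ℕ, ∑ k ∈ Finset.range N, (((k:ℝ) + 1)⁻¹ - (x + k)⁻¹)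
      = (pgD x - pgD 1) - (pgD (x + N) - pgD (1 + N)) := by
    intro N
    have e1 := pgD_sum one_pos N
    have e2 := pgD_sum hx N
    rw [Finset.sum_sub_distrib]
    have : ∑ k ∈ Finset.range N, ((k:ℝ) + 1)⁻¹ = ∑ k ∈ Finset.range N, ((1:ℝ) + k)⁻¹ := by
      apply Finset.sum_congr rfl; intro k _; ring_nf
    rw [this]
    have e1' : ∑ k ∈ Finset.range N, ((1:ℝ) + k)⁻¹ = pgD (1 + N) - pgD 1 := by
      rw [e1]; ring
    have e2' : ∑ k ∈ Finset.range N, (x + (k:ℝ))⁻¹ = pgD (x + N) - pgD x := by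
      rw [e2]; ring
    rw [e1', e2']
    ring
  have h3 : Tendsto (fun N : ℕ => ∑ k ∈ Finset.range N, (((k:ℝ) + 1)⁻¹ - (x + k)⁻¹))
      atTop (𝓝 (pgD x - pgD 1)) := by
    simp only [h2]
    have := (tendsto_const_nhds (x := pgD x - pgD 1) (f := atTop (α := ℕ))).sub (pgD_lim hx)
    simpa using this
  have := tendsto_nhds_unique h1 h3
  linarith


lemma pgD_hasDerivAt {x : ℝ} (hx : 0 < x) : HasDerivAt pgD (pgS 2 x) x := by
  have h := (pgT_hasDerivAt hx).const_add (pgD 1)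
  apply h.congr_of_eventuallyEq
  filter_upwards [Ioi_mem_nhds hx] with y hy
  exact pgD_eq hy

lemma pgS_CS {m : ℕ} (hm : 2 ≤ m) {a b : ℝ} (ha : 0 < a) (hb : 0 < b) :
    pgS m ((a + b) / 2) ≤ Real.sqrt (pgS m a * pgS m b) := by
  have hmid : 0 < (a + b) / 2 := by linarith
  set u : ℕ → ℝ := fun k => ((a + k) ^ m)⁻¹ with hu_def
  set v : ℕ → ℝ := fun k => ((b + k) ^ m)⁻¹ with hv_def
  set r : ℕ → ℝ := fun k => Real.sqrt (u k * v k) with hr_def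
  have hpos : ∀ (c : ℝ), 0 < c → ∀ k : ℕ, (0:ℝ) < c + k := fun c hc k => by
    have : (0:ℝ) ≤ k := Nat.cast_nonneg k; linarith
  have hun : ∀ k, 0 ≤ u k := fun k => by
    have := hpos a ha k; positivity
  have hvn : ∀ k, 0 ≤ v k := fun k => by
    have := hpos b hb k; positivity
  have hu : Summable u := pgS_summable hm ha
  have hv : Summable v := pgS_summable hm hb
  have hrn : ∀ k, 0 ≤ r k := fun k => Real.sqrt_nonneg _
  have hrs : Summable r := by
    refine Summable.of_nonneg_of_le hrn (fun k => ?_) ((hu.add hv).div_const 2)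
    show Real.sqrt (u k * v k) ≤ (u k + v k) / 2
    rw [Real.sqrt_mul (hun k) (v k)]
    nlinarith [sq_nonneg (Real.sqrt (u k) - Real.sqrt (v k)), Real.sq_sqrt (hun k),
      Real.sq_sqrt (hvn k), Real.sqrt_nonneg (u k), Real.sqrt_nonneg (v k)]
  have hterm : ∀ k : ℕ, (((a + b) / 2 + k) ^ m)⁻¹ ≤ r k := by
    intro k
    have h1 := hpos a ha k
    have h2 := hpos b hb k
    have h3 := hpos _ hmid k
    show (((a + b) / 2 + k) ^ m)⁻¹ ≤ Real.sqrt (u k * v k)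
    rw [Real.le_sqrt (by positivity) (mul_nonneg (hun k) (hvn k))]
    have key0 : (a + k) * (b + k) ≤ ((a + b) / 2 + k) ^ 2 := by nlinarith [sq_nonneg (a - b)]
    have key1 : ((a + k) * (b + k)) ^ m ≤ (((a + b) / 2 + k) ^ 2) ^ m :=
      pow_le_pow_left₀ (by positivity) key0 m
    calc ((((a + b) / 2 + k) ^ m)⁻¹) ^ 2 = ((((a + b) / 2 + k) ^ 2) ^ m)⁻¹ := by
          rw [← inv_pow, ← pow_mul, ← pow_mul, Nat.mul_comm, inv_pow]
      _ ≤ (((a + k) * (b + k)) ^ m)⁻¹ := inv_anti₀ (by positivity) key1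
      _ = u k * v k := by rw [mul_pow, mul_inv]
  have step1 : pgS m ((a + b) / 2) ≤ ∑' k, r k := by
    simp only [pgS]
    exact Summable.tsum_le_tsum hterm (pgS_summable hm hmid) hrs
  have step2 : ∑' k, r k ≤ Real.sqrt (pgS m a * pgS m b) := by
    refine Summable.tsum_le_of_sum_le hrs (fun s => ?_)
    have hcs : (∑ k ∈ s, r k) ^ 2 ≤ (∑ k ∈ s, u k) * (∑ k ∈ s, v k) :=
      Finset.sum_sq_le_sum_mul_sum_of_sq_eq_mul s (fun k _ => hun k) (fun k _ => hvn k)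
        (fun k _ => Real.sq_sqrt (mul_nonneg (hun k) (hvn k)))
    have h1 : ∑ k ∈ s, u k ≤ pgS m a := by
      simp only [pgS]; exact Summable.sum_le_tsum s (fun k _ => hun k) hu
    have h2 : ∑ k ∈ s, v k ≤ pgS m b := by
      simp only [pgS]; exact Summable.sum_le_tsum s (fun k _ => hvn k) hv
    rw [Real.le_sqrt (Finset.sum_nonneg fun k _ => hrn k)
      (mul_nonneg (pgS_nonneg m ha) (pgS_nonneg m hb))]
    calc (∑ k ∈ s, r k) ^ 2 ≤ (∑ k ∈ s, u k) * (∑ k ∈ s, v k) := hcs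
      _ ≤ pgS m a * pgS m b :=
        mul_le_mul h1 h2 (Finset.sum_nonneg fun k _ => hvn k) (pgS_nonneg m ha)
  exact step1.trans step2


lemma pg_iter (j : ℕ) : ∀ x : ℝ, 0 < x →
    iteratedDeriv (j + 2) pgL x = (-1)^j * (Nat.factorial (j+1)) * pgS (j+2) x := by
  induction j with
  | zero =>
    intro x hx
    rw [iteratedDeriv_succ, iteratedDeriv_one]
    have h : deriv (deriv pgL) x = pgS 2 x := (pgD_hasDerivAt hx).deriv
    simpa using h
  | succ j ih =>
    intro x hx
    rw [iteratedDeriv_succ]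
    have hev : iteratedDeriv (j+2) pgL =ᶠ[𝓝 x]
        fun y => (-1)^j * (Nat.factorial (j+1) : ℝ) * pgS (j+2) y := by
      filter_upwards [Ioi_mem_nhds hx] with y hy using ih y hy
    rw [hev.deriv_eq]
    have h := ((pgS_hasDerivAt (show 2 ≤ j+2 by omega) hx).const_mul
      ((-1:ℝ)^j * (Nat.factorial (j+1) : ℝ))).deriv
    rw [h]
    simp only [Nat.factorial_succ (j+1), pow_succ]
    push_cast
    ring

lemma polygamma_abs {n : ℕ} (hn : 1 ≤ n) {x : ℝ} (hx : 0 < x) :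
    |polygamma n x| = (Nat.factorial n : ℝ) * pgS (n+1) x := by
  obtain ⟨j, rfl⟩ : ∃ j, n = j + 1 := ⟨n - 1, by omega⟩
  have h : polygamma (j+1) x = iteratedDeriv (j+2) pgL x := rfl
  rw [h, pg_iter j x hx, abs_mul, abs_mul, abs_of_nonneg (pgS_nonneg _ hx),
    abs_pow, abs_neg, abs_one, one_pow, one_mul,
    abs_of_nonneg (by positivity : (0:ℝ) ≤ (Nat.factorial (j+1) : ℝ))]

theorem polygamma_log_convex (n : ℕ) (hn : 1 ≤ n) (a b : ℝ) (ha : 0 < a) (hb : 0 < b) :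
    |polygamma n ((a + b) / 2)| ≤ Real.sqrt (|polygamma n a| * |polygamma n b|) ∧
    Real.sqrt (|polygamma n a| * |polygamma n b|) ≤ (|polygamma n a| + |polygamma n b|) / 2 := by
  have hmid : 0 < (a + b) / 2 := by linarith
  have hm : 2 ≤ n + 1 := by omega
  rw [polygamma_abs hn ha, polygamma_abs hn hb, polygamma_abs hn hmid]
  set F := (Nat.factorial n : ℝ) with hF_def
  have hF : 0 < F := by positivity
  have hSa := pgS_nonneg (n+1) ha
  have hSb := pgS_nonneg (n+1) hb
  have hsqrt_eq : Real.sqrt (F * pgS (n+1) a * (F * pgS (n+1) b))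
      = F * Real.sqrt (pgS (n+1) a * pgS (n+1) b) := by
    rw [show F * pgS (n+1) a * (F * pgS (n+1) b) = F^2 * (pgS (n+1) a * pgS (n+1) b) by ring,
      Real.sqrt_mul (sq_nonneg F), Real.sqrt_sq hF.le]
  constructor
  · rw [hsqrt_eq]
    exact mul_le_mul_of_nonneg_left (pgS_CS hm ha hb) hF.le
  · set X := F * pgS (n+1) a
    set Y := F * pgS (n+1) b
    have hX : 0 ≤ X := by positivity
    have hY : 0 ≤ Y := by positivity
    rw [Real.sqrt_mul hX Y]
    nlinarith [sq_nonneg (Real.sqrt X - Real.sqrt Y), Real.sq_sqrt hX, Real.sq_sqrt hY,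
      Real.sqrt_nonneg X, Real.sqrt_nonneg Y]

end PolygammaAux
end
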